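/- Let (X,d) be a metric space and let M_d be the standard fuzzy metric, M_d(x,y,t) = t/(t + d(x,y)) for t > 0 and M_d(x,y,0) = 0. Then (X, M_d, ∗_L), where ∗_L is the Lukasiewicz t-norm a ∗_L b = max{a + b − 1, 0}, is a non-Archimedean fuzzy metric space. -/

import Mathlib

open Set

/-- A continuous t-norm on `[0,1]`. -/
structure IsContinuousTNorm (star : ℝ → ℝ → ℝ) : Prop where
  mem : ∀ a ∈ Icc (0:ℝ) 1, ∀ b ∈ Icc (0:ℝ) 1, star a b ∈ Icc (0:ℝ) 1
  comm : ∀ a ∈ Icc (0:ℝ) 1, ∀ b ∈ Icc (0:ℝ) 1, star a b = star b a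
  assoc : ∀ a ∈ Icc (0:ℝ) 1, ∀ b ∈ Icc (0:ℝ) 1, ∀ c ∈ Icc (0:ℝ) 1,
    star (star a b) c = star a (star b c)
  one : ∀ a ∈ Icc (0:ℝ) 1, star a 1 = a
  mono : ∀ a b c d : ℝ, a ∈ Icc (0:ℝ) 1 → b ∈ Icc (0:ℝ) 1 → c ∈ Icc (0:ℝ) 1 →
    d ∈ Icc (0:ℝ) 1 → a ≤ c → b ≤ d → star a b ≤ star c d
  continuous : ContinuousOn (fun p : ℝ × ℝ => star p.1 p.2) (Icc 0 1 ×ˢ Icc 0 1)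

/-- A fuzzy metric in the sense of Kramosil and Michalek: `M x y t` is the degree of
nearness of `x` and `y` at time `t ≥ 0`. -/
structure IsFuzzyMetric {X : Type*} (star : ℝ → ℝ → ℝ) (M : X → X → ℝ → ℝ) : Prop where
  range : ∀ x y t, 0 ≤ t → M x y t ∈ Icc (0:ℝ) 1
  km1 : ∀ x y, M x y 0 = 0
  km2 : ∀ x y, (∀ t, 0 < t → M x y t = 1) ↔ x = y
  km3 : ∀ x y t, M x y t = M y x t
  km4 : ∀ x y z t s, 0 < t → 0 < s → star (M x y t) (M y z s) ≤ M x z (t + s)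
  km5 : ∀ x y t, 0 < t → ContinuousWithinAt (M x y) (Iio t) t

/-- A non-Archimedean fuzzy metric: (KM4) is replaced by the stronger (NA). -/
structure IsNAFuzzyMetric {X : Type*} (star : ℝ → ℝ → ℝ) (M : X → X → ℝ → ℝ) : Prop where
  range : ∀ x y t, 0 ≤ t → M x y t ∈ Icc (0:ℝ) 1
  km1 : ∀ x y, M x y 0 = 0
  km2 : ∀ x y, (∀ t, 0 < t → M x y t = 1) ↔ x = y
  km3 : ∀ x y t, M x y t = M y x t
  na : ∀ x y z t s, 0 < t → 0 < s → star (M x y t) (M y z s) ≤ M x z (max t s)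
  km5 : ∀ x y t, 0 < t → ContinuousWithinAt (M x y) (Iio t) t

/-- The open ball `B_M(x, ε, t)`. -/
def fuzzyBall {X : Type*} (M : X → X → ℝ → ℝ) (x : X) (ε t : ℝ) : Set X :=
  {y | 1 - ε < M x y t}

/-- The topology on `X` is the one induced by the fuzzy metric `M`, i.e. the open balls
form a neighbourhood basis at every point. -/
def FuzzyCompatible {X : Type*} [TopologicalSpace X] (M : X → X → ℝ → ℝ) : Prop :=
  ∀ x : X, (nhds x).HasBasis (fun p : ℝ × ℝ => 0 < p.1 ∧ p.1 < 1 ∧ 0 < p.2)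
    (fun p => fuzzyBall M x p.1 p.2)

/-- The Hausdorff fuzzy distance between two subsets of a fuzzy metric space. -/
noncomputable def fuzzyHSet {X : Type*} (M : X → X → ℝ → ℝ) (A B : Set X) (t : ℝ) : ℝ :=
  min (⨅ a : A, ⨆ b : B, M a b t) (⨅ b : B, ⨆ a : A, M a b t)

/-- The Hausdorff fuzzy distance between the two parts of a disjoint union `X ⊕ Y`. -/
noncomputable def fuzzyH {X Y : Type*} (M : (X ⊕ Y) → (X ⊕ Y) → ℝ → ℝ) (t : ℝ) : ℝ :=
  min (⨅ x : X, ⨆ y : Y, M (Sum.inl x) (Sum.inr y) t)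
    (⨅ y : Y, ⨆ x : X, M (Sum.inl x) (Sum.inr y) t)

/-- A non-Archimedean fuzzy metric on the disjoint union `X ⊕ Y` is admissible if it
restricts to the given fuzzy metrics on `X` and on `Y`. -/
def IsAdmissible {X Y : Type*} (star : ℝ → ℝ → ℝ) (MX : X → X → ℝ → ℝ)
    (MY : Y → Y → ℝ → ℝ) (M : (X ⊕ Y) → (X ⊕ Y) → ℝ → ℝ) : Prop :=
  IsNAFuzzyMetric star M ∧
    (∀ x x' t, 0 ≤ t → M (Sum.inl x) (Sum.inl x') t = MX x x' t) ∧
    (∀ y y' t, 0 ≤ t → M (Sum.inr y) (Sum.inr y') t = MY y y' t)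

/-- The non-Archimedean Gromov-Hausdorff fuzzy distance. -/
noncomputable def MGH {X Y : Type*} (star : ℝ → ℝ → ℝ) (MX : X → X → ℝ → ℝ)
    (MY : Y → Y → ℝ → ℝ) (t : ℝ) : ℝ :=
  sSup ((fun M => fuzzyH M t) '' {M | IsAdmissible star MX MY M})

/-- The `t`-diameter of a fuzzy metric space. -/
noncomputable def fuzzyDiam {X : Type*} (M : X → X → ℝ → ℝ) (s : ℝ) : ℝ :=
  ⨅ p : X × X, M p.1 p.2 s

/-- `cov(X, ε, t) ≤ N` : `X` can be covered by at most `N` balls `B(c, ε, t)`. -/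
def CovLE {X : Type*} (M : X → X → ℝ → ℝ) (ε t : ℝ) (N : ℕ) : Prop :=
  ∃ C : Finset X, C.card ≤ N ∧ ∀ x : X, ∃ c ∈ C, 1 - ε < M c x t

/-- Property (TN1) of a t-norm: `a - a ∗ b ≥ a ∗ (1 - b)`. -/
def TN1 (star : ℝ → ℝ → ℝ) : Prop :=
  ∀ a ∈ Icc (0:ℝ) 1, ∀ b ∈ Icc (0:ℝ) 1, star a (1 - b) ≤ a - star a b

/-- The standard fuzzy metric associated to a metric space. -/
noncomputable def stdFuzzy {X : Type*} [MetricSpace X] (x y : X) (t : ℝ) : ℝ :=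
  if 0 < t then t / (t + dist x y) else 0

private lemma key_ineq (m d1 d2 d3 t s : ℝ) (hm : 0 < t) (hs : 0 < s)
    (htm : t ≤ m) (hsm : s ≤ m) (h1 : 0 ≤ d1) (h2 : 0 ≤ d2) (h3 : 0 ≤ d3)
    (hd3 : d3 ≤ d1 + d2) :
    t / (t + d1) + s / (s + d2) - 1 ≤ m / (m + d3) := by
  have hmpos : 0 < m := lt_of_lt_of_le hm htm
  have hA : 0 < t + d1 := by linarith
  have hB : 0 < s + d2 := by linarith
  have hA' : 0 < m + d1 := by linarith
  have hB' : 0 < m + d2 := by linarith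
  have hC : 0 < m + d3 := by linarith
  have hC' : 0 < m + d1 + d2 := by linarith
  have e1 : t / (t + d1) ≤ m / (m + d1) := by
    rw [div_le_div_iff₀ hA hA']; nlinarith
  have e2 : s / (s + d2) ≤ m / (m + d2) := by
    rw [div_le_div_iff₀ hB hB']; nlinarith
  have e3 : m / (m + d1 + d2) ≤ m / (m + d3) := by
    apply div_le_div_of_nonneg_left (le_of_lt hmpos) hC; linarith
  have e4 : m / (m + d1) + m / (m + d2) - 1 ≤ m / (m + d1 + d2) := by
    rw [div_add_div _ _ (ne_of_gt hA') (ne_of_gt hB'), sub_le_iff_le_add,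
      div_add' _ _ _ (ne_of_gt hC'), div_le_div_iff₀ (by positivity) hC']
    nlinarith [mul_nonneg (mul_nonneg hmpos.le h1) h2, mul_nonneg (mul_nonneg h1 h1) h2,
      mul_nonneg (mul_nonneg h1 h2) h2]
  linarith

/-- the standard fuzzy metric `M_d` of a metric space, together with the
Lukasiewicz t-norm `a ∗_L b = max (a + b - 1) 0`, is a non-Archimedean fuzzy metric. -/
theorem stdFuzzy_isNAFuzzyMetric_lukasiewicz {X : Type*} [MetricSpace X] :
    IsNAFuzzyMetric (fun a b : ℝ => max (a + b - 1) 0) (stdFuzzy (X := X)) := by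
  constructor
  · intro x y t ht
    unfold stdFuzzy
    split_ifs with h
    · have hd := dist_nonneg (x := x) (y := y)
      constructor
      · positivity
      · rw [div_le_one (by linarith)]; linarith
    · exact ⟨le_refl 0, zero_le_one⟩
  · intro x y; simp [stdFuzzy]
  · intro x y
    constructor
    · intro h
      have h1 := h 1 one_pos
      simp only [stdFuzzy, if_pos one_pos] at h1
      have hd := dist_nonneg (x := x) (y := y)
      have hpos : (0:ℝ) < 1 + dist x y := by linarith
      field_simp at h1
      exact dist_eq_zero.mp (by linarith)
    · intro h t ht
      subst h
      simp [stdFuzzy, if_pos ht, dist_self, ne_of_gt ht]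
  · intro x y t; unfold stdFuzzy; rw [dist_comm]
  · intro x y z t s ht hs
    simp only [stdFuzzy, if_pos ht, if_pos hs, if_pos (lt_max_of_lt_left ht)]
    set m := max t s
    have hd3 := dist_nonneg (x := x) (y := z)
    have hc : 0 ≤ m / (m + dist x z) := by positivity
    apply max_le _ hc
    exact key_ineq m (dist x y) (dist y z) (dist x z) t s ht hs (le_max_left t s)
      (le_max_right t s) dist_nonneg dist_nonneg hd3 (dist_triangle x y z)
  · intro x y t ht
    have hd := dist_nonneg (x := x) (y := y)
    have hcont : ContinuousWithinAt (fun r : ℝ => r / (r + dist x y)) (Iio t) t := by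
      apply ContinuousAt.continuousWithinAt
      exact (continuousAt_id.div (continuousAt_id.add continuousAt_const)
        (by positivity))
    apply hcont.congr_of_eventuallyEq
    · filter_upwards [Ioo_mem_nhdsLT_of_mem
        (⟨half_lt_self ht, le_refl t⟩ : t ∈ Ioc (t/2) t)] with r hr
      simp [stdFuzzy, if_pos (lt_trans (half_pos ht) hr.1)]
    · simp [stdFuzzy, if_pos ht]
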